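/- For u with a↓_{k+1} < u ≤ a↓_k, the smallest l satisfying g_r(u, l) = 0 equals a↓_{k+1}, i.e., G_r(u) = a↓_{k+1} on (a↓_{k+1}, a↓_k]. -/

import Mathlib

open Finset

/-- The entries of `a` rearranged in nonincreasing order. -/
noncomputable def sortDesc (n : ℕ) (a : Fin n → ℝ) : Fin n → ℝ :=
  fun i => a (Tuple.sort a i.rev)

/-- The sum of the `k` largest entries of `a`. -/
noncomputable def topKSum (n k : ℕ) (a : Fin n → ℝ) : ℝ :=
  ∑ i : Fin n, if (i : ℕ) < k then sortDesc n a i else 0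
/-- The relaxed function `g_r(u, l)`. -/
noncomputable def grfun (n k : ℕ) (a : Fin n → ℝ) (u l : ℝ) : ℝ :=
  (∑ i : Fin n, max (a i - u) 0) - (∑ i : Fin n, max (a i - l) 0) + k * (u - l)

lemma sortDesc_anti (n : ℕ) (a : Fin n → ℝ) : Antitone (sortDesc n a) := by
  intro i j hij
  exact Tuple.monotone_sort a (by simpa [Fin.rev_le_rev] using hij)

lemma sum_sortDesc (n : ℕ) (a : Fin n → ℝ) (f : ℝ → ℝ) :
    ∑ i, f (sortDesc n a i) = ∑ i, f (a i) :=
  Equiv.sum_comp ((Fin.revPerm).trans (Tuple.sort a)) (fun x => f (a x))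

lemma sum_ite_const (n k : ℕ) (hk : k ≤ n) (c : ℝ) :
    ∑ i : Fin n, (if (i : ℕ) < k then c else 0) = k * c := by
  classical
  rw [Fin.sum_univ_eq_sum_range (fun i => if i < k then c else 0), ← Finset.sum_filter]
  have h : (Finset.range n).filter (· < k) = Finset.range k := by
    ext x; simp only [Finset.mem_filter, Finset.mem_range]; omega
  rw [h, Finset.sum_const, Finset.card_range, nsmul_eq_mul]

/-- On `(a↓_{k+1}, a↓_k]`, the smallest root of `g_r(u, ·)` is `a↓_{k+1}`, i.e.
`G_r(u) = a↓_{k+1}`. -/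
theorem stmt12 (n k : ℕ) (hn : 2 ≤ n) (hk1 : 1 ≤ k) (hk : k < n) (a : Fin n → ℝ)
    (hgap : sortDesc n a ⟨k, hk⟩ < sortDesc n a ⟨k - 1, by omega⟩)
    (u : ℝ) (hu1 : sortDesc n a ⟨k, hk⟩ < u) (hu2 : u ≤ sortDesc n a ⟨k - 1, by omega⟩) :
    IsLeast {l : ℝ | grfun n k a u l = 0} (sortDesc n a ⟨k, hk⟩) := by
  classical
  set s := sortDesc n a with hs
  set L := s ⟨k, hk⟩ with hL
  have hanti := sortDesc_anti n a
  -- for i with i < k, s i ≥ s (k-1) ≥ u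
  have hbig : ∀ i : Fin n, (i : ℕ) < k → u ≤ s i := by
    intro i hi
    refine le_trans hu2 (hanti ?_)
    rw [Fin.le_def]
    show (i : ℕ) ≤ k - 1
    omega
  have hsmall : ∀ i : Fin n, k ≤ (i : ℕ) → s i ≤ L := by
    intro i hi
    exact hanti (by simpa [Fin.le_def] using hi)
  set T := ∑ i : Fin n, (if (i : ℕ) < k then s i else 0) with hT
  -- the sum of max(s i - u, 0)
  have hAu : ∑ i : Fin n, max (a i - u) 0 = T - k * u := by
    rw [← sum_sortDesc n a (fun x => max (x - u) 0)]
    have : ∑ i : Fin n, max (s i - u) 0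
        = ∑ i : Fin n, ((if (i : ℕ) < k then s i else 0) - (if (i : ℕ) < k then u else 0)) := by
      refine Finset.sum_congr rfl fun i _ => ?_
      by_cases hi : (i : ℕ) < k
      · simp only [if_pos hi]
        exact max_eq_left (by linarith [hbig i hi])
      · simp only [if_neg hi]
        have := hsmall i (by omega)
        rw [max_eq_right (by linarith)]; ring
    rw [this, Finset.sum_sub_distrib, sum_ite_const n k hk.le u]
  -- membership
  have hmem : grfun n k a u L = 0 := by
    have hAL : ∑ i : Fin n, max (a i - L) 0 = T - k * L := by
      rw [← sum_sortDesc n a (fun x => max (x - L) 0)]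
      have : ∑ i : Fin n, max (s i - L) 0
          = ∑ i : Fin n, ((if (i : ℕ) < k then s i else 0) - (if (i : ℕ) < k then L else 0)) := by
        refine Finset.sum_congr rfl fun i _ => ?_
        by_cases hi : (i : ℕ) < k
        · simp only [if_pos hi]
          exact max_eq_left (by linarith [hbig i hi, hu1])
        · simp only [if_neg hi]
          have := hsmall i (by omega)
          rw [max_eq_right (by linarith)]; ring
      rw [this, Finset.sum_sub_distrib, sum_ite_const n k hk.le L]
    rw [grfun, hAu, hAL]; ring
  refine ⟨hmem, ?_⟩
  intro l hl
  by_contra hcon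
  push_neg at hcon
  -- hcon : l < L; derive grfun n k a u l < 0
  have hBl : ∑ i : Fin n, max (a i - l) 0 ≥ (T - k * l) + (L - l) := by
    rw [← sum_sortDesc n a (fun x => max (x - l) 0)]
    have step1 : ∑ i : Fin n,
        ((if (i : ℕ) < k then s i - l else 0) + (if i = (⟨k, hk⟩ : Fin n) then L - l else 0))
        ≤ ∑ i : Fin n, max (s i - l) 0 := by
      refine Finset.sum_le_sum fun i _ => ?_
      by_cases hi : (i : ℕ) < k
      · have hne : i ≠ (⟨k, hk⟩ : Fin n) := by
          intro h; rw [h] at hi; simp at hi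
        simp only [if_pos hi, if_neg hne, add_zero]
        exact le_max_left _ _
      · by_cases he : i = (⟨k, hk⟩ : Fin n)
        · simp only [if_neg hi, if_pos he, zero_add]
          have : s i = L := by rw [he]
          rw [← this]
          exact le_max_left _ _
        · simp only [if_neg hi, if_neg he, add_zero]
          exact le_max_right _ _
    have step2 : ∑ i : Fin n,
        ((if (i : ℕ) < k then s i - l else 0) + (if i = (⟨k, hk⟩ : Fin n) then L - l else 0))
        = (T - k * l) + (L - l) := by
      rw [Finset.sum_add_distrib]
      have h1 : ∑ i : Fin n, (if (i : ℕ) < k then s i - l else 0)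
          = ∑ i : Fin n, ((if (i : ℕ) < k then s i else 0) - (if (i : ℕ) < k then l else 0)) := by
        refine Finset.sum_congr rfl fun i _ => ?_
        by_cases hi : (i : ℕ) < k <;> simp [hi]
      rw [h1, Finset.sum_sub_distrib, sum_ite_const n k hk.le l,
        Finset.sum_ite_eq' Finset.univ (⟨k, hk⟩ : Fin n) (fun _ => L - l)]
      simp
      exact hT.symm
    linarith [step1, step2.symm.le]
  have : grfun n k a u l < 0 := by
    rw [grfun, hAu]
    have hk' : (0:ℝ) ≤ (k:ℝ) := Nat.cast_nonneg k
    nlinarith [hBl]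
  rw [Set.mem_setOf_eq] at hl
  linarith
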